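/- Let X be a real random variable with finite expectation whose cumulative distribution function F is continuous, let s ∈ (−1,0) and set p = 1/(1+s) ∈ (1,∞). If E[(X_−)^q] < ∞ for some q > p, where X_− = max(−X,0), then Δ_s(X) < ∞; and if Δ_s(X) < ∞, then E[(X_−)^p] < ∞. -/

import Mathlib

open MeasureTheory Set ENNReal

private lemma lintegral_Iic_comp_neg (f : ℝ → ℝ≥0∞) (hf : Measurable f) (c : ℝ) :
    ∫⁻ x in Iic c, f (-x) = ∫⁻ x in Ici (-c), f x := by
  symm
  calc ∫⁻ x in Ici (-c), f x ∂volume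
      = ∫⁻ x in Ici (-c), f x ∂(Measure.map (fun x : ℝ => -x) volume) := by
        rw [Measure.map_neg_eq_self]
    _ = ∫⁻ x in (fun x : ℝ => -x) ⁻¹' (Ici (-c)), f (-x) ∂volume := by
        rw [setLIntegral_map measurableSet_Ici hf measurable_neg]
    _ = ∫⁻ x in Iic c, f (-x) ∂volume := by
        congr 1
        ext x
        simp

private lemma lintegral_Ici_comp_neg (f : ℝ → ℝ≥0∞) (hf : Measurable f) (c : ℝ) :
    ∫⁻ x in Ici c, f (-x) = ∫⁻ x in Iic (-c), f x := by
  have := lintegral_Iic_comp_neg (fun x => f (-x)) (hf.comp measurable_neg) (-c)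
  simp only [neg_neg] at this
  rw [← this]

private lemma lintegral_Ici_rpow_lt_top {r a : ℝ} (hr : r < -1) (ha : 0 < a) :
    ∫⁻ x in Ici a, ENNReal.ofReal (x ^ r) < ⊤ := by
  rw [setLIntegral_congr (Ioi_ae_eq_Ici (μ := volume) (a := a)).symm]
  exact (integrableOn_Ioi_rpow_of_lt hr ha).setLIntegral_lt_top
theorem cumulative_tsallis_entropy_Lp
    {Ω : Type*} [MeasureSpace Ω] [IsProbabilityMeasure (volume : Measure Ω)]
    (X : Ω → ℝ) (hXm : Measurable X) (hXint : Integrable X)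
    (F : ℝ → ℝ) (hF : ∀ x, F x = ((volume : Measure Ω) {ω | X ω ≤ x}).toReal)
    (hFcont : Continuous F)
    (s : ℝ) (hs : s ∈ Ioo (-1 : ℝ) 0) :
    ((∃ q : ℝ, 1 / (1 + s) < q ∧
        (∫⁻ ω, ENNReal.ofReal (max (-X ω) 0 ^ q) ∂(volume : Measure Ω)) < ⊤) →
      (∫⁻ x : ℝ, ENNReal.ofReal ((1 / s) * (F x * (1 - F x ^ s)))) < ⊤)
    ∧ ((∫⁻ x : ℝ, ENNReal.ofReal ((1 / s) * (F x * (1 - F x ^ s)))) < ⊤ →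
        (∫⁻ ω, ENNReal.ofReal (max (-X ω) 0 ^ (1 / (1 + s))) ∂(volume : Measure Ω)) < ⊤) := by
  obtain ⟨hs1, hs2⟩ := hs
  have hs1' : (0:ℝ) < 1 + s := by linarith
  have hs1'' : 1 + s < 1 := by linarith
  have hnegs : (0:ℝ) < -s := by linarith
  set p : ℝ := 1 / (1 + s) with hp
  have hp1 : 1 < p := (one_lt_div hs1').mpr (by linarith)
  have hps : (1 + s) * p = 1 := by rw [hp]; field_simp
  -- basic facts about F
  have hFnn : ∀ x, 0 ≤ F x := fun x => (hF x) ▸ ENNReal.toReal_nonneg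
  have hFle1 : ∀ x, F x ≤ 1 := by
    intro x
    rw [hF x]
    exact ENNReal.toReal_le_of_le_ofReal zero_le_one (by simpa using prob_le_one)
  have hofF : ∀ x, ENNReal.ofReal (F x) = (volume : Measure Ω) {ω | X ω ≤ x} := by
    intro x
    rw [hF x, ENNReal.ofReal_toReal (measure_ne_top _ _)]
  -- the integrand rewritten
  have hg_eq : ∀ x, (1 / s) * (F x * (1 - F x ^ s)) = (F x ^ (1 + s) - F x) / (-s) := by
    intro x
    have h1 : F x ^ (1 + s) = F x * F x ^ s := by
      rw [Real.rpow_add' (hFnn x) (by linarith), Real.rpow_one]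
    rw [h1]
    have hsne : s ≠ 0 := by linarith
    field_simp
    ring
  have hF_le_rpow : ∀ x, F x ≤ F x ^ (1 + s) := by
    intro x
    rcases eq_or_lt_of_le (hFnn x) with h | h
    · rw [← h, Real.zero_rpow (by positivity)]
    · calc F x = F x ^ (1:ℝ) := (Real.rpow_one _).symm
        _ ≤ F x ^ (1 + s) := Real.rpow_le_rpow_of_exponent_ge h (hFle1 x) (by linarith)
  have hrpow_le_one : ∀ x, F x ^ (1 + s) ≤ 1 := fun x =>
    Real.rpow_le_one (hFnn x) (hFle1 x) hs1'.le
  have hg_nonneg : ∀ x, 0 ≤ (1 / s) * (F x * (1 - F x ^ s)) := by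
    intro x
    rw [hg_eq x]
    have h1 := hF_le_rpow x
    have h2 : (0:ℝ) < (-s)⁻¹ := by positivity
    rw [div_eq_mul_inv]
    nlinarith
  have hg_ub1 : ∀ x, (1 / s) * (F x * (1 - F x ^ s)) ≤ F x ^ (1 + s) * (-s)⁻¹ := by
    intro x
    rw [hg_eq x, div_eq_mul_inv]
    have h2 : (0:ℝ) < (-s)⁻¹ := by positivity
    nlinarith [hFnn x]
  have hg_ub2 : ∀ x, (1 / s) * (F x * (1 - F x ^ s)) ≤ (1 - F x) * (-s)⁻¹ := by
    intro x
    rw [hg_eq x, div_eq_mul_inv]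
    have h2 : (0:ℝ) < (-s)⁻¹ := by positivity
    nlinarith [hrpow_le_one x]
  -- measurability of level sets
  have hM : ∀ x : ℝ, MeasurableSet {ω | X ω ≤ x} := fun x => hXm measurableSet_Iic
  -- Markov inequality
  have hMarkov : ∀ e : ℝ, 0 < e → ∀ t : ℝ, 0 < t →
      (volume : Measure Ω) {ω | X ω ≤ -t}
        ≤ (∫⁻ ω, ENNReal.ofReal (max (-X ω) 0 ^ e) ∂(volume : Measure Ω))
            / ENNReal.ofReal (t ^ e) := by
    intro e he t ht
    have hsub : {ω | X ω ≤ -t}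
        ⊆ {ω | ENNReal.ofReal (t ^ e) ≤ ENNReal.ofReal (max (-X ω) 0 ^ e)} := by
      intro ω hω
      simp only [mem_setOf_eq] at *
      exact ENNReal.ofReal_le_ofReal
        (Real.rpow_le_rpow ht.le (le_max_of_le_left (by linarith)) he.le)
    have hmble : AEMeasurable (fun ω => ENNReal.ofReal (max (-X ω) 0 ^ e))
        (volume : Measure Ω) :=
      (((hXm.neg.max measurable_const).pow measurable_const).ennreal_ofReal).aemeasurable
    have hm := mul_meas_ge_le_lintegral₀ hmble (ENNReal.ofReal (t ^ e))
    have htq : (0:ℝ) < t ^ e := Real.rpow_pos_of_pos ht e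
    rw [ENNReal.le_div_iff_mul_le (Or.inl (by simp [htq])) (Or.inl ENNReal.ofReal_ne_top)]
    calc (volume : Measure Ω) {ω | X ω ≤ -t} * ENNReal.ofReal (t ^ e)
        ≤ (volume : Measure Ω) {ω | ENNReal.ofReal (t ^ e)
            ≤ ENNReal.ofReal (max (-X ω) 0 ^ e)} * ENNReal.ofReal (t ^ e) :=
          mul_le_mul_left (measure_mono hsub) _
      _ ≤ _ := by rw [mul_comm]; exact hm
  have hXabs : (∫⁻ ω, ENNReal.ofReal |X ω| ∂(volume : Measure Ω)) < ⊤ :=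
    hXint.abs.lintegral_lt_top
  constructor
  · -- Direction 1
    rintro ⟨q, hq, hCq⟩
    set C := ∫⁻ ω, ENNReal.ofReal (max (-X ω) 0 ^ q) ∂(volume : Measure Ω) with hC
    have hq0 : 0 < q := lt_trans (by linarith : (0:ℝ) < p) hq
    set r : ℝ := q * (1 + s) with hr
    have hr1 : 1 < r := by
      have h := (div_lt_iff₀ hs1').mp hq
      nlinarith
    set kk := ENNReal.ofReal (-s)⁻¹ with hkk
    have hkkne : kk ≠ ⊤ := ENNReal.ofReal_ne_top
    have hCs_ne : C ^ (1 + s) ≠ ⊤ := ENNReal.rpow_ne_top_of_nonneg hs1'.le hCq.ne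
    have hbound1 : ∀ x ∈ Iic (-1:ℝ), ENNReal.ofReal ((1 / s) * (F x * (1 - F x ^ s)))
        ≤ kk * C ^ (1 + s) * ENNReal.ofReal ((-x) ^ (-r)) := by
      intro x hx
      have hx1 : (1:ℝ) ≤ -x := by simp only [mem_Iic] at hx; linarith
      have hx0 : (0:ℝ) < -x := by linarith
      calc ENNReal.ofReal ((1 / s) * (F x * (1 - F x ^ s)))
          ≤ ENNReal.ofReal (F x ^ (1 + s) * (-s)⁻¹) := ENNReal.ofReal_le_ofReal (hg_ub1 x)
        _ = ENNReal.ofReal (F x ^ (1 + s)) * kk := by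
            rw [ENNReal.ofReal_mul (Real.rpow_nonneg (hFnn x) _)]
        _ = (ENNReal.ofReal (F x)) ^ (1 + s) * kk := by
            rw [ENNReal.ofReal_rpow_of_nonneg (hFnn x) hs1'.le]
        _ ≤ (C / ENNReal.ofReal ((-x) ^ q)) ^ (1 + s) * kk := by
            apply mul_le_mul_left
            apply ENNReal.rpow_le_rpow _ hs1'.le
            rw [hofF x]
            have h := hMarkov q hq0 (-x) hx0
            rwa [neg_neg] at h
        _ = kk * C ^ (1 + s) * ENNReal.ofReal ((-x) ^ (-r)) := by
            rw [ENNReal.div_rpow_of_nonneg _ _ hs1'.le,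
              ENNReal.ofReal_rpow_of_nonneg (by positivity) hs1'.le,
              ← Real.rpow_mul hx0.le, ← hr,
              Real.rpow_neg hx0.le r,
              ENNReal.ofReal_inv_of_pos (Real.rpow_pos_of_pos hx0 r),
              div_eq_mul_inv]
            ring
    have hmeasr : Measurable fun y : ℝ => ENNReal.ofReal (y ^ (-r)) :=
      (measurable_id.pow measurable_const).ennreal_ofReal
    have hpiece1 : (∫⁻ x in Iic (-1:ℝ),
        ENNReal.ofReal ((1 / s) * (F x * (1 - F x ^ s)))) < ⊤ := by
      calc ∫⁻ x in Iic (-1:ℝ), ENNReal.ofReal ((1 / s) * (F x * (1 - F x ^ s)))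
          ≤ ∫⁻ x in Iic (-1:ℝ), kk * C ^ (1 + s) * ENNReal.ofReal ((-x) ^ (-r)) :=
            lintegral_mono_ae ((ae_restrict_iff' measurableSet_Iic).mpr
              (Filter.Eventually.of_forall hbound1))
        _ = kk * C ^ (1 + s) * ∫⁻ x in Iic (-1:ℝ), ENNReal.ofReal ((-x) ^ (-r)) :=
            lintegral_const_mul' _ _ (ENNReal.mul_ne_top hkkne hCs_ne)
        _ < ⊤ := by
            apply ENNReal.mul_lt_top (ENNReal.mul_lt_top hkkne.lt_top hCs_ne.lt_top)
            have := lintegral_Iic_comp_neg (fun y => ENNReal.ofReal (y ^ (-r))) hmeasr (-1)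
            rw [this]
            rw [neg_neg]
            exact lintegral_Ici_rpow_lt_top (by linarith) one_pos
    have hpiece2 : (∫⁻ x in Ioc (-1:ℝ) 0,
        ENNReal.ofReal ((1 / s) * (F x * (1 - F x ^ s)))) < ⊤ := by
      calc ∫⁻ x in Ioc (-1:ℝ) 0, ENNReal.ofReal ((1 / s) * (F x * (1 - F x ^ s)))
          ≤ ∫⁻ _x in Ioc (-1:ℝ) 0, kk := by
            apply lintegral_mono
            intro x
            apply ENNReal.ofReal_le_ofReal
            have h2 : (0:ℝ) < (-s)⁻¹ := by positivity
            nlinarith [hg_ub2 x, hFnn x]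
        _ = kk * volume (Ioc (-1:ℝ) 0) := setLIntegral_const _ _
        _ < ⊤ := ENNReal.mul_lt_top hkkne.lt_top (by
            rw [Real.volume_Ioc]; exact ENNReal.ofReal_lt_top)
    have hpiece3 : (∫⁻ x in Ioi (0:ℝ),
        ENNReal.ofReal ((1 / s) * (F x * (1 - F x ^ s)))) < ⊤ := by
      have hb : ∀ x ∈ Ioi (0:ℝ), ENNReal.ofReal ((1 / s) * (F x * (1 - F x ^ s)))
          ≤ kk * volume {ω | x ≤ max (X ω) 0} := by
        intro x _
        calc ENNReal.ofReal ((1 / s) * (F x * (1 - F x ^ s)))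
            ≤ ENNReal.ofReal ((1 - F x) * (-s)⁻¹) := ENNReal.ofReal_le_ofReal (hg_ub2 x)
          _ = ENNReal.ofReal (1 - F x) * kk := by
              rw [ENNReal.ofReal_mul (by nlinarith [hFle1 x])]
          _ = (volume : Measure Ω) {ω | X ω ≤ x}ᶜ * kk := by
              rw [measure_compl (hM x) (measure_ne_top _ _), measure_univ, ← hofF x,
                ← ENNReal.ofReal_one, ← ENNReal.ofReal_sub _ (hFnn x)]
          _ ≤ kk * volume {ω | x ≤ max (X ω) 0} := by
              rw [mul_comm]
              apply mul_le_mul_right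
              apply measure_mono
              intro ω hω
              simp only [mem_compl_iff, mem_setOf_eq, not_le] at hω ⊢
              exact le_max_of_le_left hω.le
      calc ∫⁻ x in Ioi (0:ℝ), ENNReal.ofReal ((1 / s) * (F x * (1 - F x ^ s)))
          ≤ ∫⁻ x in Ioi (0:ℝ), kk * volume {ω | x ≤ max (X ω) 0} :=
            lintegral_mono_ae ((ae_restrict_iff' measurableSet_Ioi).mpr
              (Filter.Eventually.of_forall hb))
        _ = kk * ∫⁻ x in Ioi (0:ℝ), volume {ω | x ≤ max (X ω) 0} :=
            lintegral_const_mul' _ _ hkkne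
        _ = kk * ∫⁻ ω, ENNReal.ofReal (max (X ω) 0) ∂(volume : Measure Ω) := by
            congr 1
            exact (lintegral_eq_lintegral_meas_le (f := fun ω => max (X ω) 0)
              (volume : Measure Ω)
              (Filter.Eventually.of_forall (fun ω => le_max_right _ _))
              (hXm.max measurable_const).aemeasurable).symm
        _ ≤ kk * ∫⁻ ω, ENNReal.ofReal |X ω| ∂(volume : Measure Ω) := by
            apply mul_le_mul_right
            apply lintegral_mono
            intro ω
            exact ENNReal.ofReal_le_ofReal (max_le (le_abs_self _) (abs_nonneg _))
        _ < ⊤ := ENNReal.mul_lt_top hkkne.lt_top hXabs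
    have hsplit := lintegral_add_compl (μ := (volume : Measure ℝ))
      (fun x : ℝ => ENNReal.ofReal ((1 / s) * (F x * (1 - F x ^ s))))
      (measurableSet_Iic (a := (0:ℝ)))
    rw [← hsplit, compl_Iic]
    have hIic : (∫⁻ x in Iic (0:ℝ),
        ENNReal.ofReal ((1 / s) * (F x * (1 - F x ^ s)))) < ⊤ := by
      have hu : Iic (0:ℝ) = Iic (-1:ℝ) ∪ Ioc (-1:ℝ) 0 :=
        (Iic_union_Ioc_eq_Iic (by norm_num)).symm
      rw [hu, lintegral_union measurableSet_Ioc
        (Iic_disjoint_Ioc (le_refl (-1:ℝ)))]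
      exact ENNReal.add_lt_top.mpr ⟨hpiece1, hpiece2⟩
    exact ENNReal.add_lt_top.mpr ⟨hIic, hpiece3⟩
  · -- Direction 2
    intro hD
    have hmeasg : Measurable fun x : ℝ =>
        ENNReal.ofReal ((1 / s) * (F x * (1 - F x ^ s))) :=
      (measurable_const.mul ((hFcont.measurable).mul
        (measurable_const.sub ((hFcont.measurable).pow measurable_const)))).ennreal_ofReal
    set B := ∫⁻ ω, ENNReal.ofReal (max (-X ω) 0) ∂(volume : Measure Ω) with hB
    have hBlt : B < ⊤ := lt_of_le_of_lt (lintegral_mono fun ω =>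
      ENNReal.ofReal_le_ofReal (max_le (neg_le_abs _) (abs_nonneg _))) hXabs
    have hMarkov1 : ∀ t : ℝ, 0 < t →
        (volume : Measure Ω) {ω | X ω ≤ -t} ≤ B / ENNReal.ofReal t := by
      intro t ht
      have h := hMarkov 1 one_pos t ht
      simpa only [Real.rpow_one] using h
    set c : ℝ := (2:ℝ) ^ (1/s) with hc
    have hc0 : 0 < c := Real.rpow_pos_of_pos two_pos _
    obtain ⟨t0, ht01, hFc⟩ : ∃ t0 : ℝ, 1 ≤ t0 ∧ ∀ t : ℝ, t0 ≤ t → F (-t) ≤ c := by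
      refine ⟨max 1 (B.toReal / c + 1), le_max_left _ _, ?_⟩
      intro t ht
      have htpos : 0 < t := lt_of_lt_of_le (lt_of_lt_of_le one_pos (le_max_left _ _)) ht
      have h2 : B / ENNReal.ofReal t ≤ ENNReal.ofReal c := by
        rw [ENNReal.div_le_iff_le_mul (Or.inl (by simp [htpos]))
            (Or.inl ENNReal.ofReal_ne_top)]
        rw [← ENNReal.ofReal_mul hc0.le]
        calc B = ENNReal.ofReal B.toReal := (ENNReal.ofReal_toReal hBlt.ne).symm
          _ ≤ ENNReal.ofReal (c * t) := by
            apply ENNReal.ofReal_le_ofReal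
            have h3 : B.toReal / c + 1 ≤ t := le_trans (le_max_right _ _) ht
            have h4 : B.toReal ≤ (t - 1) * c := (div_le_iff₀ hc0).mp (by linarith)
            nlinarith
      rw [hF (-t)]
      apply ENNReal.toReal_le_of_le_ofReal hc0.le
      exact le_trans (hMarkov1 t htpos) h2
    have ht00 : (0:ℝ) < t0 := lt_of_lt_of_le one_pos ht01
    -- pointwise lower bound on the entropy integrand
    have hlb : ∀ x : ℝ, F x ≤ c →
        F x ^ (1 + s) ≤ (-(2*s)) * ((1 / s) * (F x * (1 - F x ^ s))) := by
      intro x hxc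
      rw [hg_eq x]
      rcases eq_or_lt_of_le (hFnn x) with h | h
      · rw [← h, Real.zero_rpow (by positivity)]
        simp
      · have hkey : F x ≤ F x ^ (1 + s) / 2 := by
          have e1 : F x ^ (1 + s) * F x ^ (-s) = F x := by
            rw [← Real.rpow_add h]
            have : (1 + s) + (-s) = 1 := by ring
            rw [this, Real.rpow_one]
          have e2 : F x ^ (-s) ≤ c ^ (-s) :=
            Real.rpow_le_rpow (hFnn x) hxc (by linarith)
          have e3 : c ^ (-s) = 1/2 := by
            have hsne : s ≠ 0 := ne_of_lt hs2
            rw [hc, ← Real.rpow_mul (by norm_num : (0:ℝ) ≤ 2)]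
            have hex : (1/s) * (-s) = -1 := by field_simp
            rw [hex, Real.rpow_neg_one]
            norm_num
          have e4 : 0 < F x ^ (1 + s) := Real.rpow_pos_of_pos h _
          have e5 : 0 ≤ F x ^ (-s) := Real.rpow_nonneg (hFnn x) _
          calc F x = F x ^ (1 + s) * F x ^ (-s) := e1.symm
            _ ≤ F x ^ (1 + s) * (1/2) := by nlinarith
            _ = F x ^ (1 + s) / 2 := by ring
        have hsne : s ≠ 0 := ne_of_lt hs2
        rw [div_eq_mul_inv]
        have hrw : (-(2*s)) * ((F x ^ (1 + s) - F x) * (-s)⁻¹)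
            = 2 * (F x ^ (1 + s) - F x) := by
          field_simp
        rw [hrw]
        linarith
    have hGGanti : Antitone (fun t : ℝ => (volume : Measure Ω) {ω | X ω ≤ -t}) := by
      intro a b hab
      apply measure_mono
      intro ω hω
      simp only [mem_setOf_eq] at *
      linarith
    have hGG_eq : ∀ t : ℝ, ((volume : Measure Ω) {ω | X ω ≤ -t}) ^ (1 + s)
        = ENNReal.ofReal (F (-t) ^ (1 + s)) := by
      intro t
      rw [← hofF (-t)]
      exact ENNReal.ofReal_rpow_of_nonneg (hFnn _) hs1'.le
    obtain ⟨A, hA⟩ : ∃ A : ℝ≥0∞,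
        A = ∫⁻ t in Ici t0, ((volume : Measure Ω) {ω | X ω ≤ -t}) ^ (1 + s) := ⟨_, rfl⟩
    have hAlt : A < ⊤ := by
      rw [hA]
      have hb : ∀ t ∈ Ici t0, ((volume : Measure Ω) {ω | X ω ≤ -t}) ^ (1 + s)
          ≤ ENNReal.ofReal (-(2*s))
            * ENNReal.ofReal ((1 / s) * (F (-t) * (1 - F (-t) ^ s))) := by
        intro t ht
        rw [hGG_eq t, ← ENNReal.ofReal_mul (by linarith : (0:ℝ) ≤ -(2*s))]
        exact ENNReal.ofReal_le_ofReal (hlb (-t) (hFc t ht))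
      calc ∫⁻ t in Ici t0, ((volume : Measure Ω) {ω | X ω ≤ -t}) ^ (1 + s)
          ≤ ∫⁻ t in Ici t0, ENNReal.ofReal (-(2*s))
            * ENNReal.ofReal ((1 / s) * (F (-t) * (1 - F (-t) ^ s))) :=
            lintegral_mono_ae ((ae_restrict_iff' measurableSet_Ici).mpr
              (Filter.Eventually.of_forall hb))
        _ = ENNReal.ofReal (-(2*s)) * ∫⁻ t in Ici t0,
              ENNReal.ofReal ((1 / s) * (F (-t) * (1 - F (-t) ^ s))) :=
            lintegral_const_mul' _ _ ENNReal.ofReal_ne_top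
        _ = ENNReal.ofReal (-(2*s)) * ∫⁻ x in Iic (-t0),
              ENNReal.ofReal ((1 / s) * (F x * (1 - F x ^ s))) := by
            congr 1
            exact lintegral_Ici_comp_neg
              (fun x => ENNReal.ofReal ((1 / s) * (F x * (1 - F x ^ s)))) hmeasg t0
        _ ≤ ENNReal.ofReal (-(2*s)) * ∫⁻ x,
              ENNReal.ofReal ((1 / s) * (F x * (1 - F x ^ s))) :=
            mul_le_mul_right (setLIntegral_le_lintegral _ _) _
        _ < ⊤ := ENNReal.mul_lt_top ENNReal.ofReal_lt_top hD
    have hdecay : ∀ t : ℝ, t0 ≤ t →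
        ENNReal.ofReal (t - t0) * ((volume : Measure Ω) {ω | X ω ≤ -t}) ^ (1 + s) ≤ A := by
      intro t ht
      have heq : ENNReal.ofReal (t - t0) * ((volume : Measure Ω) {ω | X ω ≤ -t}) ^ (1 + s)
          = ∫⁻ _u in Ioc t0 t, ((volume : Measure Ω) {ω | X ω ≤ -t}) ^ (1 + s) := by
        rw [setLIntegral_const, Real.volume_Ioc, mul_comm]
      rw [heq]
      calc ∫⁻ _u in Ioc t0 t, ((volume : Measure Ω) {ω | X ω ≤ -t}) ^ (1 + s)
          ≤ ∫⁻ u in Ioc t0 t, ((volume : Measure Ω) {ω | X ω ≤ -u}) ^ (1 + s) :=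
            lintegral_mono_ae ((ae_restrict_iff' measurableSet_Ioc).mpr
              (Filter.Eventually.of_forall fun u hu =>
                ENNReal.rpow_le_rpow (hGGanti hu.2) hs1'.le))
        _ ≤ A := by
            rw [hA]
            exact lintegral_mono_set (fun u hu => le_of_lt hu.1)
    -- layer cake for the conclusion
    have hp0 : 0 < p := by linarith
    rw [lintegral_rpow_eq_lintegral_meas_le_mul (volume : Measure Ω)
      (f := fun ω => max (-X ω) 0)
      (Filter.Eventually.of_forall fun ω => le_max_right _ _)
      (hXm.neg.max measurable_const).aemeasurable hp0]
    apply ENNReal.mul_lt_top ENNReal.ofReal_lt_top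
    have hsetG : ∀ t ∈ Ioi (0:ℝ),
        (volume : Measure Ω) {a | t ≤ max (-X a) 0} * ENNReal.ofReal (t ^ (p-1))
          = (volume : Measure Ω) {ω | X ω ≤ -t} * ENNReal.ofReal (t ^ (p-1)) := by
      intro t ht
      have ht' : (0:ℝ) < t := ht
      congr 2
      ext ω
      simp only [mem_setOf_eq, le_max_iff]
      constructor
      · rintro (h | h)
        · linarith
        · linarith
      · intro h; left; linarith
    rw [setLIntegral_congr_fun measurableSet_Ioi
      hsetG]
    set T : ℝ := t0 + t0 with hT
    have hsplit2 : Ioc (0:ℝ) T ∪ Ioi T = Ioi (0:ℝ) :=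
      Ioc_union_Ioi_eq_Ioi (by linarith)
    rw [← hsplit2, lintegral_union measurableSet_Ioi (Ioc_disjoint_Ioi le_rfl)]
    have hpa : (∫⁻ t in Ioc (0:ℝ) T,
        (volume : Measure Ω) {ω | X ω ≤ -t} * ENNReal.ofReal (t ^ (p-1))) < ⊤ := by
      have hb : ∀ t ∈ Ioc (0:ℝ) T,
          (volume : Measure Ω) {ω | X ω ≤ -t} * ENNReal.ofReal (t ^ (p-1))
            ≤ ENNReal.ofReal (T ^ (p-1)) := by
        intro t ht
        calc (volume : Measure Ω) {ω | X ω ≤ -t} * ENNReal.ofReal (t ^ (p-1))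
            ≤ 1 * ENNReal.ofReal (T ^ (p-1)) :=
              mul_le_mul' prob_le_one (ENNReal.ofReal_le_ofReal
                (Real.rpow_le_rpow ht.1.le ht.2 (by linarith)))
          _ = ENNReal.ofReal (T ^ (p-1)) := one_mul _
      calc ∫⁻ t in Ioc (0:ℝ) T,
            (volume : Measure Ω) {ω | X ω ≤ -t} * ENNReal.ofReal (t ^ (p-1))
          ≤ ∫⁻ _t in Ioc (0:ℝ) T, ENNReal.ofReal (T ^ (p-1)) :=
            lintegral_mono_ae ((ae_restrict_iff' measurableSet_Ioc).mpr
              (Filter.Eventually.of_forall hb))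
        _ = ENNReal.ofReal (T ^ (p-1)) * volume (Ioc (0:ℝ) T) := setLIntegral_const _ _
        _ < ⊤ := ENNReal.mul_lt_top ENNReal.ofReal_lt_top
            (by rw [Real.volume_Ioc]; exact ENNReal.ofReal_lt_top)
    have hpb : (∫⁻ t in Ioi T,
        (volume : Measure Ω) {ω | X ω ≤ -t} * ENNReal.ofReal (t ^ (p-1))) < ⊤ := by
      have key : ∀ t ∈ Ioi T,
          (volume : Measure Ω) {ω | X ω ≤ -t} * ENNReal.ofReal (t ^ (p-1))
            ≤ (A ^ (p-1) * ENNReal.ofReal (2 ^ (p-1)))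
              * ((volume : Measure Ω) {ω | X ω ≤ -t}) ^ (1 + s) := by
        intro t ht
        have htT : T < t := ht
        set G := (volume : Measure Ω) {ω | X ω ≤ -t} with hG
        rcases eq_or_ne G 0 with h0 | h0
        · rw [h0]
          simp
        · have hGne : G ≠ ⊤ := measure_ne_top _ _
          have ht0t : t0 ≤ t := by linarith
          have htpos : 0 < t := by linarith
          have hhalf : (0:ℝ) < t/2 := by linarith
          have h1 : G ^ (1 + s) ≤ A / ENNReal.ofReal (t/2) := by
            rw [ENNReal.le_div_iff_mul_le (Or.inl (by simp [hhalf]))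
              (Or.inl ENNReal.ofReal_ne_top)]
            calc G ^ (1 + s) * ENNReal.ofReal (t/2)
                ≤ G ^ (1 + s) * ENNReal.ofReal (t - t0) :=
                  mul_le_mul_right (ENNReal.ofReal_le_ofReal (by linarith)) _
              _ ≤ A := by rw [mul_comm]; exact hdecay t ht0t
          have hexp : (1 + s) + (1 + s) * (p - 1) = 1 := by linear_combination hps
          have hsplitG : G * ENNReal.ofReal (t ^ (p-1))
              = G ^ (1 + s) * ((G ^ (1 + s)) ^ (p-1) * ENNReal.ofReal (t ^ (p-1))) := by
            calc G * ENNReal.ofReal (t ^ (p-1))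
                = G ^ ((1 + s) + (1 + s) * (p - 1)) * ENNReal.ofReal (t ^ (p-1)) := by
                  rw [hexp, ENNReal.rpow_one]
              _ = (G ^ (1 + s) * G ^ ((1 + s) * (p - 1))) * ENNReal.ofReal (t ^ (p-1)) := by
                  rw [ENNReal.rpow_add _ _ h0 hGne]
              _ = G ^ (1 + s) * ((G ^ (1 + s)) ^ (p-1) * ENNReal.ofReal (t ^ (p-1))) := by
                  rw [← ENNReal.rpow_mul]
                  ring
          rw [hsplitG, mul_comm (A ^ (p-1) * ENNReal.ofReal (2 ^ (p-1))) _]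
          apply mul_le_mul_right
          have h3 : (G ^ (1 + s)) ^ (p-1) ≤ (A / ENNReal.ofReal (t/2)) ^ (p-1) :=
            ENNReal.rpow_le_rpow h1 (by linarith)
          have h4 : (A / ENNReal.ofReal (t/2)) ^ (p-1)
              = A ^ (p-1) / ENNReal.ofReal ((t/2) ^ (p-1)) := by
            rw [ENNReal.div_rpow_of_nonneg _ _ (by linarith : (0:ℝ) ≤ p - 1),
              ENNReal.ofReal_rpow_of_nonneg hhalf.le (by linarith)]
          have h5 : ENNReal.ofReal (t ^ (p-1))
              = ENNReal.ofReal ((t/2) ^ (p-1)) * ENNReal.ofReal (2 ^ (p-1)) := by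
            rw [← ENNReal.ofReal_mul (by positivity),
              ← Real.mul_rpow (by positivity) (by norm_num)]
            norm_num
          calc (G ^ (1 + s)) ^ (p-1) * ENNReal.ofReal (t ^ (p-1))
              ≤ (A ^ (p-1) / ENNReal.ofReal ((t/2) ^ (p-1)))
                * (ENNReal.ofReal ((t/2) ^ (p-1)) * ENNReal.ofReal (2 ^ (p-1))) := by
                rw [← h4, ← h5]
                exact mul_le_mul_left h3 _
            _ = A ^ (p-1) * ENNReal.ofReal (2 ^ (p-1))
                * (ENNReal.ofReal ((t/2) ^ (p-1)) / ENNReal.ofReal ((t/2) ^ (p-1))) := by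
                simp only [div_eq_mul_inv]
                ring
            _ ≤ A ^ (p-1) * ENNReal.ofReal (2 ^ (p-1)) :=
                mul_le_of_le_one_right' ENNReal.div_self_le_one
      have hApne : A ^ (p-1) ≠ ⊤ := ENNReal.rpow_ne_top_of_nonneg (by linarith) hAlt.ne
      calc ∫⁻ t in Ioi T, (volume : Measure Ω) {ω | X ω ≤ -t} * ENNReal.ofReal (t ^ (p-1))
          ≤ ∫⁻ t in Ioi T, (A ^ (p-1) * ENNReal.ofReal (2 ^ (p-1)))
              * ((volume : Measure Ω) {ω | X ω ≤ -t}) ^ (1 + s) :=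
            lintegral_mono_ae ((ae_restrict_iff' measurableSet_Ioi).mpr
              (Filter.Eventually.of_forall key))
        _ = (A ^ (p-1) * ENNReal.ofReal (2 ^ (p-1)))
              * ∫⁻ t in Ioi T, ((volume : Measure Ω) {ω | X ω ≤ -t}) ^ (1 + s) :=
            lintegral_const_mul' _ _ (ENNReal.mul_ne_top hApne ENNReal.ofReal_ne_top)
        _ ≤ (A ^ (p-1) * ENNReal.ofReal (2 ^ (p-1))) * A := by
            apply mul_le_mul_right
            rw [hA]
            apply lintegral_mono'
            · apply Measure.restrict_mono _ le_rfl
              intro u hu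
              have hu' : T < u := hu
              exact mem_Ici.mpr (by linarith)
            · exact le_rfl
        _ < ⊤ := ENNReal.mul_lt_top
            (ENNReal.mul_lt_top hApne.lt_top ENNReal.ofReal_lt_top) hAlt
    exact ENNReal.add_lt_top.mpr ⟨hpa, hpb⟩
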